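/- The Cayley tree 𝒯^k admits a path covering: there exists a set D̂ ⊆ E of edges such that every vertex v ∈ V belongs to exactly two edges of D̂ (i.e., 𝒯^k has a spanning 2-regular subgraph, whose components are doubly infinite paths passing through every vertex). -/

import Mathlib

open Classical

/-- `G` is a Cayley tree with branching number `k`: an infinite connected acyclic
simple graph in which every vertex has exactly `k + 1` neighbors. -/
structure IsCayleyTree {V : Type*} (G : SimpleGraph V) (k : ℕ) : Prop where
  infinite : Infinite V
  connected : G.Connected
  acyclic : G.IsAcyclic
  degree : ∀ v : V, (G.neighborSet v).ncard = k + 1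

/-- A spin configuration takes values in `{-1, +1}`. -/
def IsSpin {V : Type*} (σ : V → ℤ) : Prop := ∀ v, σ v = 1 ∨ σ v = -1

/-- `σ` is frustrated exactly on the edges of `D`: for every edge `{x,y}` of `G`,
`σ x * σ y = -1` if `{x,y} ∈ D` and `σ x * σ y = 1` otherwise. -/
def SatisfiesD {V : Type*} (G : SimpleGraph V) (D : Set (Sym2 V)) (σ : V → ℤ) : Prop :=
  ∀ x y : V, G.Adj x y →
    (s(x, y) ∈ D → σ x * σ y = -1) ∧ (s(x, y) ∉ D → σ x * σ y = 1)

/-- The excess energy `H(σ) - H(σbase) = J * Σ_{{x,y} ∈ E} (σbase x * σbase y - σ x * σ y)`,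
a sum with finitely many nonzero terms when `σ` and `σbase` differ at finitely many sites. -/
noncomputable def excessEnergy {V : Type*} (G : SimpleGraph V) (J : ℝ) (σ σbase : V → ℤ) : ℝ :=
  J * ∑ᶠ e ∈ G.edgeSet,
      ((Sym2.lift ⟨fun x y => σbase x * σbase y - σ x * σ y, fun _ _ => by ring⟩ e : ℤ) : ℝ)

/-- The configuration obtained from `σ` by flipping all spins in `C`. -/
noncomputable def flipSpins {V : Type*} (σ : V → ℤ) (C : Set V) : V → ℤ :=
  fun v => if v ∈ C then -σ v else σ v

/-- The number `d_D(v)` of edges of `D` incident to the vertex `v`. -/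
noncomputable def incidentCount {V : Type*} (D : Set (Sym2 V)) (v : V) : ℕ :=
  {e ∈ D | v ∈ e}.ncard

/-- A set of vertices is connected if any two of its vertices are joined by a
walk staying within the set. -/
def SetConnected {V : Type*} (G : SimpleGraph V) (S : Set V) : Prop :=
  ∀ x ∈ S, ∀ y ∈ S, ∃ p : G.Walk x y, ∀ z ∈ p.support, z ∈ S

namespace PathCoverAux

open SimpleGraph

variable {V : Type*}

noncomputable def spWalk (G : SimpleGraph V) (hc : G.Connected) (r v : V) : G.Walk r v :=
  (hc.exists_walk_length_eq_dist r v).choose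

lemma spWalk_length (G : SimpleGraph V) (hc : G.Connected) (r v : V) :
    (spWalk G hc r v).length = G.dist r v :=
  (hc.exists_walk_length_eq_dist r v).choose_spec

noncomputable def par (G : SimpleGraph V) (hc : G.Connected) (r v : V) : V :=
  (spWalk G hc r v).getVert (G.dist r v - 1)

lemma dist_pos (G : SimpleGraph V) (hc : G.Connected) {r v : V} (hv : v ≠ r) :
    0 < G.dist r v := by
  have : G.dist r v ≠ 0 :=
    dist_ne_zero_iff_ne_and_reachable.mpr ⟨fun h => hv h.symm, hc r v⟩
  omega

lemma adj_par (G : SimpleGraph V) (hc : G.Connected) {r v : V} (hv : v ≠ r) :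
    G.Adj (par G hc r v) v := by
  have hd := dist_pos G hc hv
  have h1 : G.dist r v - 1 < (spWalk G hc r v).length := by
    rw [spWalk_length]; omega
  have := (spWalk G hc r v).adj_getVert_succ h1
  have h2 : G.dist r v - 1 + 1 = (spWalk G hc r v).length := by rw [spWalk_length]; omega
  rw [h2, Walk.getVert_length] at this
  exact this

lemma exists_walk_getVert {G : SimpleGraph V} {a b : V} (w : G.Walk a b) (i : ℕ) :
    ∃ q : G.Walk a (w.getVert i), q.length ≤ i := by
  induction w generalizing i with
  | nil => exact ⟨(Walk.nil).copy rfl (by cases i <;> rfl), by simp⟩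
  | @cons a c b h p ih =>
    cases i with
    | zero => exact ⟨(Walk.nil).copy rfl (by simp [Walk.getVert_zero]), by simp⟩
    | succ j =>
      obtain ⟨q, hq⟩ := ih j
      exact ⟨(Walk.cons h q).copy rfl (by rw [Walk.getVert_cons_succ]), by simpa using hq⟩

lemma dist_getVert_le {G : SimpleGraph V} {a b : V} (w : G.Walk a b) (i : ℕ) :
    G.dist a (w.getVert i) ≤ i := by
  obtain ⟨q, hq⟩ := exists_walk_getVert w i
  exact le_trans (dist_le q) hq

lemma dist_par (G : SimpleGraph V) (hc : G.Connected) {r v : V} (hv : v ≠ r) :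
    G.dist r (par G hc r v) = G.dist r v - 1 := by
  have hd := dist_pos G hc hv
  have hle : G.dist r (par G hc r v) ≤ G.dist r v - 1 := dist_getVert_le _ _
  obtain ⟨p, hp⟩ := hc.exists_walk_length_eq_dist r (par G hc r v)
  have h2 : G.dist r v ≤ G.dist r (par G hc r v) + 1 := by
    have := dist_le (p.concat (adj_par G hc hv))
    rwa [Walk.length_concat, hp] at this
  omega

lemma par_unique (G : SimpleGraph V) (hc : G.Connected) (ha : G.IsAcyclic) {r u v : V}
    (huv : G.Adj u v) (hlt : G.dist r u < G.dist r v) : u = par G hc r v := by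
  obtain ⟨p, hp⟩ := hc.exists_walk_length_eq_dist r u
  have h2 : G.dist r v ≤ G.dist r u + 1 := by
    have := dist_le (p.concat huv)
    rwa [Walk.length_concat, hp] at this
  have h1 : G.dist r u = G.dist r v - 1 := by omega
  have hd : 0 < G.dist r v := by omega
  set q := p.concat huv with hqdef
  have hq : q.length = G.dist r v := by rw [Walk.length_concat, hp]; omega
  have hqp : q.IsPath := q.isPath_of_length_eq_dist hq
  have hwp : (spWalk G hc r v).IsPath :=
    (spWalk G hc r v).isPath_of_length_eq_dist (spWalk_length G hc r v)
  have hqw : q = spWalk G hc r v := by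
    have := ha.path_unique ⟨q, hqp⟩ ⟨spWalk G hc r v, hwp⟩
    exact congrArg Subtype.val this
  have : q.getVert (G.dist r v - 1) = u := by
    rw [hqdef, Walk.concat_eq_append, Walk.getVert_append]
    rw [hp, h1]
    simp
  rw [hqw] at this
  exact this.symm

lemma adj_dist_ne (G : SimpleGraph V) (hc : G.Connected) (ha : G.IsAcyclic) {r u v : V}
    (huv : G.Adj u v) : G.dist r u ≠ G.dist r v := by
  intro heq
  have hne : u ≠ v := huv.ne
  have hdvu : G.dist v u = 1 := dist_eq_one_iff_adj.mpr huv.symm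
  obtain ⟨p, hp⟩ := hc.exists_walk_length_eq_dist r u
  have hpp : p.IsPath := p.isPath_of_length_eq_dist hp
  by_cases hv : v ∈ p.support
  · have hsplit := p.take_spec hv
    have hlen : (p.takeUntil v hv).length + (p.dropUntil v hv).length = p.length := by
      have := congrArg Walk.length hsplit
      rwa [Walk.length_append] at this
    have h1 : G.dist r v ≤ (p.takeUntil v hv).length := dist_le _
    have h2 : G.dist v u ≤ (p.dropUntil v hv).length := dist_le _
    omega
  · have hqrev : (p.concat huv).reverse.IsPath := by
      rw [Walk.reverse_concat]
      exact (hpp.reverse).cons (by rwa [Walk.support_reverse, List.mem_reverse])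
    have hqp : (p.concat huv).IsPath := by
      rw [← Walk.isPath_reverse_iff]; exact hqrev
    obtain ⟨w, hw⟩ := hc.exists_walk_length_eq_dist r v
    have hwp : w.IsPath := w.isPath_of_length_eq_dist hw
    have := ha.path_unique ⟨p.concat huv, hqp⟩ ⟨w, hwp⟩
    have hpw : p.concat huv = w := congrArg Subtype.val this
    have hlen : (p.concat huv).length = w.length := congrArg Walk.length hpw
    rw [Walk.length_concat, hp, hw] at hlen
    omega

lemma adj_dist_cases (G : SimpleGraph V) (hc : G.Connected) (ha : G.IsAcyclic) {r u v : V}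
    (huv : G.Adj u v) : G.dist r v = G.dist r u + 1 ∨ G.dist r u = G.dist r v + 1 := by
  obtain ⟨p, hp⟩ := hc.exists_walk_length_eq_dist r u
  obtain ⟨q, hq⟩ := hc.exists_walk_length_eq_dist r v
  have h1 : G.dist r v ≤ G.dist r u + 1 := by
    have := dist_le (p.concat huv); rwa [Walk.length_concat, hp] at this
  have h2 : G.dist r u ≤ G.dist r v + 1 := by
    have := dist_le (q.concat huv.symm); rwa [Walk.length_concat, hq] at this
  have h3 := adj_dist_ne G hc ha huv (r := r)
  omega


def children (G : SimpleGraph V) (r v : V) : Set V :=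
  {c | G.Adj v c ∧ G.dist r c = G.dist r v + 1}

lemma children_subset (G : SimpleGraph V) (r v : V) :
    children G r v ⊆ G.neighborSet v := fun _ hc => hc.1

lemma neighbor_finite {G : SimpleGraph V} {k : ℕ} (hG : IsCayleyTree G k) (v : V) :
    (G.neighborSet v).Finite :=
  Set.finite_of_ncard_ne_zero (by rw [hG.degree]; omega)

lemma children_eq (G : SimpleGraph V) (hc : G.Connected) (ha : G.IsAcyclic) {r v : V}
    (hv : v ≠ r) : children G r v = G.neighborSet v \ {par G hc r v} := by
  have hd := dist_pos G hc hv
  have hdp := dist_par G hc hv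
  ext c
  simp only [children, Set.mem_setOf_eq, Set.mem_diff, mem_neighborSet, Set.mem_singleton_iff]
  constructor
  · rintro ⟨hadj, hdc⟩
    refine ⟨hadj, fun hcp => ?_⟩
    rw [hcp, hdp] at hdc; omega
  · rintro ⟨hadj, hcp⟩
    refine ⟨hadj, ?_⟩
    rcases adj_dist_cases G hc ha hadj.symm (r := r) with h | h
    · exact absurd (par_unique G hc ha hadj.symm (by omega)) hcp
    · omega

lemma children_eq_root (G : SimpleGraph V) (r : V) :
    children G r r = G.neighborSet r := by
  ext c
  simp only [children, Set.mem_setOf_eq, mem_neighborSet]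
  constructor
  · exact fun h => h.1
  · intro h
    refine ⟨h, ?_⟩
    rw [SimpleGraph.dist_self, dist_eq_one_iff_adj]
    exact h

lemma children_card {G : SimpleGraph V} {k : ℕ} (hG : IsCayleyTree G k) (hk : 2 ≤ k)
    (r v : V) : 2 ≤ (children G r v).ncard := by
  by_cases hv : v = r
  · subst hv
    rw [children_eq_root, hG.degree]; omega
  · rw [children_eq G hG.connected hG.acyclic hv]
    have hmem : par G hG.connected r v ∈ G.neighborSet v := (adj_par G hG.connected hv).symm
    rw [Set.ncard_diff_singleton_of_mem hmem, hG.degree]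
    omega

lemma children_finite {G : SimpleGraph V} {k : ℕ} (hG : IsCayleyTree G k) (r v : V) :
    (children G r v).Finite :=
  (neighbor_finite hG v).subset (children_subset G r v)

noncomputable def pickT (S : Set V) (n : ℕ) : Set V :=
  if h : n ≤ S.ncard then (Set.exists_subset_card_eq h).choose else ∅

lemma pickT_subset (S : Set V) (n : ℕ) : pickT S n ⊆ S := by
  unfold pickT
  split
  · exact (Set.exists_subset_card_eq ‹_›).choose_spec.1
  · exact Set.empty_subset S

lemma pickT_card (S : Set V) {n : ℕ} (h : n ≤ S.ncard) : (pickT S n).ncard = n := by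
  unfold pickT
  rw [dif_pos h]
  exact (Set.exists_subset_card_eq h).choose_spec.2

noncomputable def sel (G : SimpleGraph V) (hc : G.Connected) (r : V) : V → Bool :=
  fun v =>
    if hv : v = r then false
    else
      decide (v ∈ pickT (children G r (par G hc r v))
        (if par G hc r v = r then 2
         else if sel G hc r (par G hc r v) then 1 else 2))
termination_by v => G.dist r v
decreasing_by
  all_goals
    rw [dist_par G hc hv]
    have := dist_pos G hc hv
    omega

noncomputable def needsN (G : SimpleGraph V) (hc : G.Connected) (r v : V) : ℕ :=
  if v = r then 2 else if sel G hc r v then 1 else 2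

noncomputable def chos (G : SimpleGraph V) (hc : G.Connected) (r v : V) : Set V :=
  pickT (children G r v) (needsN G hc r v)

lemma sel_eq (G : SimpleGraph V) (hc : G.Connected) {r v : V} (hv : v ≠ r) :
    sel G hc r v = decide (v ∈ chos G hc r (par G hc r v)) := by
  conv_lhs => rw [sel]
  rw [dif_neg hv]
  rfl

lemma needsN_le (G : SimpleGraph V) (hc : G.Connected) (r v : V) :
    needsN G hc r v ≤ 2 := by
  unfold needsN
  split
  · omega
  · split <;> omega

lemma chos_subset (G : SimpleGraph V) (hc : G.Connected) (r v : V) :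
    chos G hc r v ⊆ children G r v := pickT_subset _ _

lemma chos_card {G : SimpleGraph V} {k : ℕ} (hG : IsCayleyTree G k) (hk : 2 ≤ k) (r v : V) :
    (chos G hG.connected r v).ncard = needsN G hG.connected r v :=
  pickT_card _ (le_trans (needsN_le _ _ _ _) (children_card hG hk r v))

lemma mem_chos_sel {G : SimpleGraph V} (hc : G.Connected) (ha : G.IsAcyclic) {r u v : V}
    (h : v ∈ chos G hc r u) :
    v ≠ r ∧ u = par G hc r v ∧ sel G hc r v = true := by
  have hch : v ∈ children G r u := chos_subset G hc r u h
  obtain ⟨hadj, hdist⟩ := hch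
  have hvr : v ≠ r := by
    intro hvr; rw [hvr, SimpleGraph.dist_self] at hdist; omega
  have hup : u = par G hc r v := par_unique G hc ha hadj (by omega)
  refine ⟨hvr, hup, ?_⟩
  rw [sel_eq G hc hvr, decide_eq_true_eq, ← hup]
  exact h

noncomputable def Dhat (G : SimpleGraph V) (hc : G.Connected) (r : V) : Set (Sym2 V) :=
  {e | ∃ u c, c ∈ chos G hc r u ∧ e = s(u, c)}

lemma Dhat_subset (G : SimpleGraph V) (hc : G.Connected) (r : V) :
    Dhat G hc r ⊆ G.edgeSet := by
  rintro e ⟨u, c, hcc, rfl⟩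
  exact (chos_subset G hc r u hcc).1

theorem incident_two {G : SimpleGraph V} {k : ℕ} (hG : IsCayleyTree G k) (hk : 2 ≤ k)
    (r v : V) : incidentCount (Dhat G hG.connected r) v = 2 := by
  set hc := hG.connected with hhc
  have ha := hG.acyclic
  set S1 : Set (Sym2 V) := (fun c => s(v, c)) '' chos G hc r v with hS1
  set S2 : Set (Sym2 V) := {e | v ≠ r ∧ sel G hc r v = true ∧ e = s(par G hc r v, v)} with hS2
  have hsplit : {e ∈ Dhat G hc r | v ∈ e} = S1 ∪ S2 := by
    ext e
    constructor
    · rintro ⟨⟨u, c, hcc, rfl⟩, hve⟩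
      obtain ⟨hcr, hup, hselc⟩ := mem_chos_sel hc ha hcc
      rcases Sym2.mem_iff.mp hve with hvu | hvc
      · subst hvu
        exact Or.inl ⟨c, hcc, rfl⟩
      · subst hvc
        subst hup
        exact Or.inr ⟨hcr, hselc, rfl⟩
    · rintro (⟨c, hcc, rfl⟩ | ⟨hvr, hsel, rfl⟩)
      · exact ⟨⟨v, c, hcc, rfl⟩, Sym2.mem_iff.mpr (Or.inl rfl)⟩
      · refine ⟨⟨par G hc r v, v, ?_, rfl⟩, Sym2.mem_iff.mpr (Or.inr rfl)⟩
        rw [sel_eq G hc hvr, decide_eq_true_eq] at hsel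
        exact hsel
  have hdisj : Disjoint S1 S2 := by
    rw [Set.disjoint_left]
    rintro e ⟨c, hcc, rfl⟩ ⟨hvr, hsel, heq⟩
    have hch : c ∈ children G r v := chos_subset G hc r v hcc
    have hd := dist_pos G hc hvr
    have hdp := dist_par G hc hvr
    rcases Sym2.eq_iff.mp heq with ⟨h1, h2⟩ | ⟨h1, h2⟩
    · exact (adj_par G hc hvr).ne h1.symm
    · rw [h2] at hch
      have h3 := hch.2
      rw [hdp] at h3
      omega
  have hchosfin : (chos G hc r v).Finite :=
    (children_finite hG r v).subset (chos_subset G hc r v)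
  have hS1card : S1.ncard = needsN G hc r v := by
    rw [hS1, Set.ncard_image_of_injOn, hhc, chos_card hG hk]
    intro c1 h1 c2 h2 heq
    have hne1 : c1 ≠ v := fun h => (chos_subset G hc r v h1).1.ne h.symm
    rcases Sym2.eq_iff.mp heq with ⟨_, h⟩ | ⟨h1', h2'⟩
    · exact h
    · exact h2'.trans h1'
  have hS1fin : S1.Finite := hchosfin.image _
  have hS2fin : S2.Finite := by
    apply Set.Finite.subset (Set.finite_singleton (s(par G hc r v, v)))
    rintro e ⟨_, _, rfl⟩
    rfl
  have hcount : incidentCount (Dhat G hc r) v = S1.ncard + S2.ncard := by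
    rw [incidentCount, hsplit, Set.ncard_union_eq hdisj hS1fin hS2fin]
  by_cases hvr : v = r
  · have hS2e : S2 = ∅ := by
      ext e; simp only [hS2, Set.mem_setOf_eq, Set.mem_empty_iff_false, iff_false]
      rintro ⟨h, _, _⟩; exact h hvr
    rw [hcount, hS1card, hS2e, Set.ncard_empty, needsN, if_pos hvr]
  · by_cases hsel : sel G hc r v = true
    · have hS2e : S2 = {s(par G hc r v, v)} := by
        ext e
        simp only [hS2, Set.mem_setOf_eq, Set.mem_singleton_iff]
        exact ⟨fun h => h.2.2, fun h => ⟨hvr, hsel, h⟩⟩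
      rw [hcount, hS1card, hS2e, Set.ncard_singleton, needsN, if_neg hvr, if_pos hsel]
    · have hS2e : S2 = ∅ := by
        ext e; simp only [hS2, Set.mem_setOf_eq, Set.mem_empty_iff_false, iff_false]
        rintro ⟨_, h, _⟩; exact hsel h
      rw [hcount, hS1card, hS2e, Set.ncard_empty, needsN, if_neg hvr, if_neg hsel]

end PathCoverAux

/-- The Cayley tree admits a path covering: a set of edges `D̂` such that
every vertex belongs to exactly two edges of `D̂` (a spanning 2-regular subgraph). -/
theorem path_covering_exists {V : Type*} (G : SimpleGraph V) (k : ℕ) (hk : 2 ≤ k)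
    (hG : IsCayleyTree G k) :
    ∃ Dhat : Set (Sym2 V), Dhat ⊆ G.edgeSet ∧ ∀ v : V, incidentCount Dhat v = 2 := by
  have : Nonempty V := hG.infinite.nonempty
  let r : V := Classical.arbitrary V
  exact ⟨PathCoverAux.Dhat G hG.connected r, PathCoverAux.Dhat_subset G hG.connected r,
    fun v => PathCoverAux.incident_two hG hk r v⟩
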